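/- Let I ⊆ ℝ be an open interval, t₀ ∈ I, x₀ ∈ ℝ, and let m, h₁, h₂ : I → ℝ be continuously differentiable with h₂(t) ≠ 0 for all t ∈ I. Define M(t) := m(t) + (h₂(t)/h₂(t₀))·(x₀ − m(t₀)) and V(t) := h₂(t)·[h₁(t) − (h₂(t)/h₂(t₀))·h₁(t₀)], and assume V(t) > 0 for all t ∈ I with t > t₀. Define f(x,t) := (2πV(t))^{-1/2}·exp(−(x − M(t))²/(2V(t))) for t > t₀, A₁(x,t) := m′(t) + (x − m(t))·h₂′(t)/h₂(t), and A₂(t) := h₂(t)²·r′(t) where r(t) = h₁(t)/h₂(t). Then f satisfies the Fokker–Planck equation ∂f/∂t (x,t) = −∂/∂x [A₁(x,t)·f(x,t)] + (1/2)·A₂(t)·∂²f/∂x² (x,t) for all x ∈ ℝ and t ∈ I with t > t₀. -/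

import Mathlib

open Real

set_option maxHeartbeats 2000000 in
/-- The Gaussian transition density `f x t` with conditional mean `M t` and variance `V t`
of a Gauss–Markov process satisfies the Fokker–Planck equation
`∂f/∂t = -∂/∂x (A₁ f) + (1/2) A₂ ∂²f/∂x²` for `t > t₀`. -/
theorem fokkerPlanck_of_gaussMarkov_transition_density
    (I : Set ℝ) (hIopen : IsOpen I) (hI : I.OrdConnected)
    (t₀ : ℝ) (ht₀ : t₀ ∈ I) (x₀ : ℝ)
    (m h₁ h₂ m' h₁' h₂' : ℝ → ℝ)
    (hm : ∀ t ∈ I, HasDerivAt m (m' t) t) (hm' : ContinuousOn m' I)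
    (hh₁ : ∀ t ∈ I, HasDerivAt h₁ (h₁' t) t) (hh₁' : ContinuousOn h₁' I)
    (hh₂ : ∀ t ∈ I, HasDerivAt h₂ (h₂' t) t) (hh₂' : ContinuousOn h₂' I)
    (hne : ∀ t ∈ I, h₂ t ≠ 0)
    (M V : ℝ → ℝ)
    (hM : ∀ t : ℝ, M t = m t + (h₂ t / h₂ t₀) * (x₀ - m t₀))
    (hV : ∀ t : ℝ, V t = h₂ t * (h₁ t - (h₂ t / h₂ t₀) * h₁ t₀))
    (hVpos : ∀ t ∈ I, t₀ < t → 0 < V t)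
    (f : ℝ → ℝ → ℝ)
    (hf : ∀ x t : ℝ, f x t =
      (2 * π * V t) ^ (-(1 : ℝ) / 2) * Real.exp (-(x - M t) ^ 2 / (2 * V t)))
    (A₁ : ℝ → ℝ → ℝ)
    (hA₁ : ∀ x t : ℝ, A₁ x t = m' t + (x - m t) * (h₂' t / h₂ t))
    (A₂ : ℝ → ℝ)
    (hA₂ : ∀ t : ℝ, A₂ t = (h₂ t) ^ 2 * deriv (fun s => h₁ s / h₂ s) t) :
    ∀ x : ℝ, ∀ t ∈ I, t₀ < t →
      deriv (fun τ => f x τ) t =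
        - deriv (fun y => A₁ y t * f y t) x
          + (1 / 2) * A₂ t * deriv (fun y => deriv (fun z => f z t) y) x := by
  intro x t ht htgt
  have hVt : 0 < V t := hVpos t ht htgt
  have hVtne : V t ≠ 0 := ne_of_gt hVt
  have h2t : h₂ t ≠ 0 := hne t ht
  have h2t0 : h₂ t₀ ≠ 0 := hne t₀ ht₀
  have hbpos : 0 < 2 * π * V t := by positivity
  have hbne : (2 * π * V t) ≠ 0 := ne_of_gt hbpos
  -- derivatives of M and V
  have hMd : HasDerivAt M (m' t + h₂' t / h₂ t₀ * (x₀ - m t₀)) t := by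
    rw [funext hM]
    exact (hm t ht).add (((hh₂ t ht).div_const _).mul_const _)
  have hVd : HasDerivAt V (h₂' t * (h₁ t - h₂ t / h₂ t₀ * h₁ t₀) +
      h₂ t * (h₁' t - h₂' t / h₂ t₀ * h₁ t₀)) t := by
    rw [funext hV]
    exact (hh₂ t ht).mul ((hh₁ t ht).sub (((hh₂ t ht).div_const _).mul_const _))
  set Mp : ℝ := m' t + h₂' t / h₂ t₀ * (x₀ - m t₀) with hMp
  set Vp : ℝ := h₂' t * (h₁ t - h₂ t / h₂ t₀ * h₁ t₀) +
      h₂ t * (h₁' t - h₂' t / h₂ t₀ * h₁ t₀) with hVp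
  -- time derivative of f x
  have hP : HasDerivAt (fun τ => (2 * π * V τ) ^ (-(1 : ℝ) / 2))
      (-((2 * π * V t) ^ (-(1 : ℝ) / 2) * Vp / (2 * V t))) t := by
    have h := (hVd.const_mul (2 * π)).rpow_const (p := -(1:ℝ)/2) (Or.inl hbne)
    convert h using 1
    rw [Real.rpow_sub hbpos, Real.rpow_one]
    field_simp
  have hE : HasDerivAt (fun τ => Real.exp (-(x - M τ) ^ 2 / (2 * V τ)))
      (Real.exp (-(x - M t) ^ 2 / (2 * V t)) *
        ((x - M t) * Mp / V t + (x - M t) ^ 2 * Vp / (2 * (V t) ^ 2))) t := by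
    have h2vne : (2 : ℝ) * V t ≠ 0 := by positivity
    have hN := (((hasDerivAt_const t x).sub hMd).pow 2).neg
    have h := (hN.div (hVd.const_mul 2) h2vne).exp
    refine h.congr_deriv ?_
    simp only [Pi.sub_apply, Pi.neg_apply, Pi.pow_apply, Pi.div_apply]
    push_cast
    field_simp
    ring
  have hLHS : deriv (fun τ => f x τ) t =
      -((2 * π * V t) ^ (-(1 : ℝ) / 2) * Vp / (2 * V t)) *
        Real.exp (-(x - M t) ^ 2 / (2 * V t)) +
      (2 * π * V t) ^ (-(1 : ℝ) / 2) *
        (Real.exp (-(x - M t) ^ 2 / (2 * V t)) *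
          ((x - M t) * Mp / V t + (x - M t) ^ 2 * Vp / (2 * (V t) ^ 2))) := by
    rw [funext fun τ => hf x τ]
    exact (hP.mul hE).deriv
  -- first spatial derivative
  have hgy : ∀ y : ℝ, HasDerivAt (fun z => f z t)
      ((2 * π * V t) ^ (-(1 : ℝ) / 2) * Real.exp (-(y - M t) ^ 2 / (2 * V t)) *
        (-((y - M t) / V t))) y := by
    intro y
    have h1 : HasDerivAt (fun z => -(z - M t) ^ 2 / (2 * V t))
        (-((y - M t) / V t)) y := by
      have h := ((((hasDerivAt_id y).sub_const (M t)).pow 2).neg).div_const (2 * V t)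
      refine h.congr_deriv ?_
      simp only [id]
      push_cast
      field_simp
    have h2 := (h1.exp).const_mul ((2 * π * V t) ^ (-(1 : ℝ) / 2))
    rw [funext fun z => hf z t]
    refine h2.congr_deriv ?_
    ring
  have hg1 : deriv (fun z => f z t) = fun y =>
      (2 * π * V t) ^ (-(1 : ℝ) / 2) * Real.exp (-(y - M t) ^ 2 / (2 * V t)) *
        (-((y - M t) / V t)) :=
    funext fun y => (hgy y).deriv
  -- second spatial derivative
  have hg2 : HasDerivAt (fun y =>
      (2 * π * V t) ^ (-(1 : ℝ) / 2) * Real.exp (-(y - M t) ^ 2 / (2 * V t)) *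
        (-((y - M t) / V t)))
      ((2 * π * V t) ^ (-(1 : ℝ) / 2) * Real.exp (-(x - M t) ^ 2 / (2 * V t)) *
        ((x - M t) ^ 2 / (V t) ^ 2 - 1 / V t)) x := by
    have h1 : HasDerivAt (fun y => (2 * π * V t) ^ (-(1 : ℝ) / 2) *
        Real.exp (-(y - M t) ^ 2 / (2 * V t)))
        ((2 * π * V t) ^ (-(1 : ℝ) / 2) * Real.exp (-(x - M t) ^ 2 / (2 * V t)) *
          (-((x - M t) / V t))) x := by
      have h := hgy x
      rwa [show (fun z => f z t) = fun z => (2 * π * V t) ^ (-(1 : ℝ) / 2) *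
        Real.exp (-(z - M t) ^ 2 / (2 * V t)) from funext fun z => hf z t] at h
    have h2 : HasDerivAt (fun y => -((y - M t) / V t)) (-(1 / V t)) x := by
      have h := (((hasDerivAt_id x).sub_const (M t)).div_const (V t)).neg
      exact h
    have h := h1.mul h2
    refine h.congr_deriv ?_
    first
    | (field_simp; ring)
    | field_simp
  have hT2 : deriv (fun y => deriv (fun z => f z t) y) x =
      (2 * π * V t) ^ (-(1 : ℝ) / 2) * Real.exp (-(x - M t) ^ 2 / (2 * V t)) *
        ((x - M t) ^ 2 / (V t) ^ 2 - 1 / V t) := by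
    rw [hg1]
    exact hg2.deriv
  -- drift term derivative
  have hA1d : HasDerivAt (fun y => A₁ y t) (h₂' t / h₂ t) x := by
    rw [funext fun y => hA₁ y t]
    have h := (hasDerivAt_const x (m' t)).add
      (((hasDerivAt_id x).sub_const (m t)).mul_const (h₂' t / h₂ t))
    refine h.congr_deriv ?_
    ring
  have hT1 : deriv (fun y => A₁ y t * f y t) x =
      h₂' t / h₂ t * f x t +
      A₁ x t * ((2 * π * V t) ^ (-(1 : ℝ) / 2) *
        Real.exp (-(x - M t) ^ 2 / (2 * V t)) * (-((x - M t) / V t))) :=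
    (hA1d.mul (hgy x)).deriv
  -- the ratio derivative and A₂
  have hr : deriv (fun s => h₁ s / h₂ s) t =
      (h₁' t * h₂ t - h₁ t * h₂' t) / h₂ t ^ 2 :=
    ((hh₁ t ht).div (hh₂ t ht) h2t).deriv
  have hA₂t : A₂ t = h₁' t * h₂ t - h₁ t * h₂' t := by
    rw [hA₂ t, hr]
    field_simp
  -- key identities eliminating t₀
  have hVp2 : Vp = 2 * V t * h₂' t / h₂ t + (h₁' t * h₂ t - h₁ t * h₂' t) := by
    rw [hVp, hV t]
    field_simp [h2t, h2t0]
    ring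
  have hMp2 : Mp = m' t + (M t - m t) * (h₂' t / h₂ t) := by
    rw [hMp, hM t]
    field_simp [h2t, h2t0]
    ring
  -- assemble
  rw [hLHS, hT1, hT2, hA₂t, hf x t, hA₁ x t, hVp2, hMp2]
  generalize (2 * π * V t) ^ (-(1 : ℝ) / 2) = c
  generalize Real.exp (-(x - M t) ^ 2 / (2 * V t)) = E
  generalize hvv : V t = v at hVtne
  generalize M t = mu
  field_simp [h2t]
  ring
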